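/- Let A be an m×m integer matrix with irreducible characteristic polynomial, and let α be an eigenvalue with conjugates α₁,…,α_m. If v ∈ ℚ(α)^m is an eigenvector for α and τ_i : ℚ(α) → ℂ are the m distinct field embeddings, then the matrix B = (τ_i(v_j))_{i,j} is invertible. -/

import Mathlib

/-- If `A` is an integer matrix with irreducible characteristic polynomial,
`K = ℚ(α)` for an eigenvalue `α`, `v ∈ K^m` an eigenvector for `α`,
and `τ i` are the `m` distinct embeddings of `K` into `ℂ`, then the
matrix `B = (τ i (v j))` is invertible. -/
theorem stmt_1 {m : ℕ} (A : Matrix (Fin m) (Fin m) ℤ)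
    (hirr : Irreducible ((A.map (Int.cast : ℤ → ℚ)).charpoly))
    (K : Type*) [Field K] [Algebra ℚ K]
    (α : K) (hK : Algebra.adjoin ℚ ({α} : Set K) = ⊤)
    (hα : Polynomial.aeval α ((A.map (Int.cast : ℤ → ℚ)).charpoly) = 0)
    (v : Fin m → K) (hv : v ≠ 0)
    (heig : (A.map (algebraMap ℤ K)).mulVec v = α • v)
    (τ : Fin m → (K →ₐ[ℚ] ℂ)) (hτ : Function.Injective τ) :
    IsUnit (Matrix.of (fun i j => τ i (v j)) : Matrix (Fin m) (Fin m) ℂ) := by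
  rw [← Matrix.linearIndependent_rows_iff_isUnit]
  set B : Matrix (Fin m) (Fin m) ℂ := Matrix.of (fun i j => τ i (v j))
  have hμ : Function.Injective (fun i => τ i α) := by
    intro i j hij
    apply hτ
    apply AlgHom.ext_of_adjoin_eq_top hK
    intro x hx
    rcases hx with rfl
    exact hij
  set f : Module.End ℂ (Fin m → ℂ) := Matrix.mulVecLin (A.map (Int.cast : ℤ → ℂ)) with hf
  have heigvec : ∀ i, f.HasEigenvector (τ i α) (B i) := by
    intro i
    constructor
    · rw [Module.End.mem_eigenspace_iff]
      funext k
      have := congrFun heig k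
      have h2 := congrArg (τ i) this
      simp only [Matrix.mulVec, dotProduct, Pi.smul_apply, smul_eq_mul, map_sum,
        map_mul, Matrix.map_apply] at h2 ⊢
      simpa [hf, B, Matrix.mulVec, dotProduct] using h2
    · intro h
      obtain ⟨k, hk⟩ : ∃ k, v k ≠ 0 := by
        by_contra hc
        push_neg at hc
        exact hv (funext hc)
      have := congrFun h k
      simp only [B, Matrix.of_apply, Pi.zero_apply] at this
      exact hk ((map_eq_zero_iff _ (τ i).injective).mp this)
  exact Module.End.eigenvectors_linearIndependent' _ (fun i => τ i α) hμ _ heigvec
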